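/- The DTPR-max algorithm is ω-competitive for the online pause and resume maximization problem: for every price sequence c_1, …, c_T with c_t ∈ [L, U] for all t, the decisions produced by DTPR-max form a feasible solution (they sum to k), and OPT(c) is at most ω times the profit of DTPR-max on c. -/
import Mathlib


open Finset

/-- A feasible solution: binary decisions with `x 0 = 0`, `x (T+1) = 0`,
and exactly `k` accepted prices among times `1, …, T`. -/
def Feasible (T k : ℕ) (x : ℕ → ℕ) : Prop :=
  (∀ t, x t ≤ 1) ∧ x 0 = 0 ∧ x (T + 1) = 0 ∧ (∑ t ∈ Finset.Icc 1 T, x t) = k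

/-- Profit of a solution: accepted prices minus switching costs. -/
noncomputable def profit (β : ℝ) (T : ℕ) (c : ℕ → ℝ) (x : ℕ → ℕ) : ℝ :=
  (∑ t ∈ Finset.Icc 1 T, c t * (x t : ℝ))
    - β * ∑ t ∈ Finset.Icc 1 (T + 1), |(x t : ℝ) - (x (t - 1) : ℝ)|

/-- Offline optimum of the maximization problem. -/
noncomputable def OPTmax (β : ℝ) (T k : ℕ) (c : ℕ → ℝ) : ℝ :=
  sSup {v : ℝ | ∃ x : ℕ → ℕ, Feasible T k x ∧ profit β T c x = v}

/-- DTPR-max threshold values `ℓ_i`. -/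
noncomputable def lMax (L β ω : ℝ) (k : ℕ) (i : ℕ) : ℝ :=
  L * (1 + (ω - 1) * (1 + ω / (k : ℝ)) ^ (i - 1))
    - 2 * β * (ω / (k : ℝ) - 1 / (k : ℝ) + 1) * (1 + ω / (k : ℝ)) ^ (i - 1)

/-- DTPR-max threshold values `u_i = ℓ_i + 2β`. -/
noncomputable def uMax (L β ω : ℝ) (k : ℕ) (i : ℕ) : ℝ :=
  lMax L β ω k i + 2 * β

/-- The state of DTPR-max after processing time `t`:
the decision `x_t` and the counter `i` after time `t` (initially `(0, 1)`).
When the previous decision was `0` it accepts iff `c_t ≥ u_i`;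
when the previous decision was `1` it accepts iff `c_t ≥ ℓ_i`. -/
noncomputable def dtprMaxState (k T : ℕ) (ℓ u : ℕ → ℝ) (c : ℕ → ℝ) : ℕ → ℕ × ℕ
  | 0 => (0, 1)
  | t + 1 =>
    let p := dtprMaxState k T ℓ u c t
    if k < p.2 then (0, p.2)
    else if (T : ℤ) - ((t : ℤ) + 1) ≤ (k : ℤ) - (p.2 : ℤ) then (1, p.2 + 1)
    else if p.1 = 0 then
      if u p.2 ≤ c (t + 1) then (1, p.2 + 1) else (0, p.2)
    else
      if ℓ p.2 ≤ c (t + 1) then (1, p.2 + 1) else (0, p.2)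

/-- The decisions of DTPR-max. -/
noncomputable def dtprMaxX (k T : ℕ) (ℓ u : ℕ → ℝ) (c : ℕ → ℝ) (t : ℕ) : ℕ :=
  (dtprMaxState k T ℓ u c t).1

/-- excess of accepted prices over the thresholds used by the analysis -/
noncomputable def exc (L : ℝ) (k T : ℕ) (ℓ u : ℕ → ℝ) (c : ℕ → ℝ) : ℕ → ℝ
  | 0 => 0
  | t + 1 =>
    let p := dtprMaxState k T ℓ u c t
    if k < p.2 then 0
    else if (T : ℤ) - ((t : ℤ) + 1) ≤ (k : ℤ) - (p.2 : ℤ) then c (t + 1) - L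
    else if p.1 = 0 then
      if u p.2 ≤ c (t + 1) then c (t + 1) - u p.2 else 0
    else
      if ℓ p.2 ≤ c (t + 1) then c (t + 1) - ℓ p.2 else 0

section Alg
variable (L U β ω : ℝ) (k : ℕ)

lemma lMax_eq (i : ℕ) :
    lMax L β ω k i = L + (L * (ω - 1) - 2 * β * (ω / (k:ℝ) - 1 / (k:ℝ) + 1))
      * (1 + ω / (k : ℝ)) ^ (i - 1) := by
  unfold lMax; ring

variable (hL : 0 < L) (hLU : L < U) (hk : 1 ≤ k)
  (hβ : 0 < 2 * β) (hβUL : 2 * β < U - L)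
  (hω : 0 < ω)
  (heq : U - L - 2 * β
      = (L * (ω - 1) - 2 * β * (1 - 1 / (k : ℝ) + ω / (k : ℝ)))
          * (1 + ω / (k : ℝ)) ^ k)

include hk hω in
lemma rho_pos : (0:ℝ) < 1 + ω / (k:ℝ) := by
  have hk' : (0:ℝ) < k := by exact_mod_cast hk
  positivity

include hk hω hβUL heq in
lemma A_pos : 0 < L * (ω - 1) - 2 * β * (ω / (k:ℝ) - 1 / (k:ℝ) + 1) := by
  have h1 : (0:ℝ) < (1 + ω / (k:ℝ)) ^ k := pow_pos (rho_pos ω k hk hω) k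
  nlinarith [heq, hβUL]

include hk hω hβUL heq hβ hL in
lemma omega_gt_one : 1 < ω := by
  have hA := A_pos L U β ω k hk hβUL hω heq
  have hk' : (1:ℝ) ≤ k := by exact_mod_cast hk
  have hkpos : (0:ℝ) < k := by linarith
  by_contra h
  push_neg at h
  have h2 : 0 < ω / (k:ℝ) - 1 / (k:ℝ) + 1 := by
    have he : ω / (k:ℝ) - 1 / (k:ℝ) + 1 = (ω - 1 + k)/(k:ℝ) := by
      field_simp
    rw [he]
    apply div_pos (by linarith) hkpos
  nlinarith [mul_nonpos_of_nonneg_of_nonpos (le_of_lt hL) (by linarith : ω - 1 ≤ 0)]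

end Alg

section Alg2
variable (L U β ω : ℝ) (k : ℕ)
  (hL : 0 < L) (hk : 1 ≤ k) (hβ : 0 < 2 * β) (hω : 1 < ω)
  (hA : 0 < L * (ω - 1) - 2 * β * (ω / (k:ℝ) - 1 / (k:ℝ) + 1))

include hk hω in
lemma rho_ge_one : (1:ℝ) ≤ 1 + ω / (k:ℝ) := by
  have hk' : (0:ℝ) < k := by exact_mod_cast hk
  have : 0 < ω / (k:ℝ) := div_pos (by linarith) hk'
  linarith

include hk hω hA in
lemma lMax_gt_L (j : ℕ) : L < lMax L β ω k j := by
  rw [lMax_eq]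
  have := pow_pos (lt_of_lt_of_le one_pos (rho_ge_one ω k hk hω)) (j-1)
  nlinarith

include hk hω hA in
lemma lMax_mono {i j : ℕ} (hij : i ≤ j) : lMax L β ω k i ≤ lMax L β ω k j := by
  rw [lMax_eq, lMax_eq]
  have h1 := rho_ge_one ω k hk hω
  have := pow_le_pow_right₀ h1 (Nat.sub_le_sub_right hij 1)
  nlinarith

include hβ in
lemma lMax_lt_uMax (j : ℕ) : lMax L β ω k j < uMax L β ω k j := by
  unfold uMax; linarith

include hk hω hA hβ in
lemma uMax_mono {i j : ℕ} (hij : i ≤ j) : uMax L β ω k i ≤ uMax L β ω k j := by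
  unfold uMax
  have := lMax_mono L β ω k hk hω hA hij
  linarith

variable (heq : U - L - 2 * β
      = (L * (ω - 1) - 2 * β * (1 - 1 / (k : ℝ) + ω / (k : ℝ)))
          * (1 + ω / (k : ℝ)) ^ k)

include heq in
lemma uMax_top : uMax L β ω k (k+1) = U := by
  unfold uMax
  rw [lMax_eq]
  simp only [Nat.add_sub_cancel]
  have : L * (ω - 1) - 2 * β * (ω / (k:ℝ) - 1 / (k:ℝ) + 1)
      = L * (ω - 1) - 2 * β * (1 - 1 / (k:ℝ) + ω / (k:ℝ)) := by ring
  rw [this, ← heq]; ring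

include hk in
lemma identityI : ∀ v : ℕ, v ≤ k →
    (k:ℝ) * uMax L β ω k (v+1) - 2*β
      = ω * ((∑ j ∈ Icc 1 v, lMax L β ω k j) + ((k:ℝ) - v) * L - 2*β) := by
  have hk' : (0:ℝ) < k := by exact_mod_cast hk
  have hkne : (k:ℝ) ≠ 0 := ne_of_gt hk'
  intro v
  induction v with
  | zero =>
    intro _
    simp only [Icc_self, Nat.cast_zero, sub_zero]
    rw [show Icc 1 0 = (∅ : Finset ℕ) by simp]
    simp only [sum_empty, zero_add]
    unfold uMax
    rw [lMax_eq]
    simp only [Nat.sub_self, pow_zero]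
    field_simp
    ring
  | succ v ih =>
    intro hv
    have hv' : v ≤ k := le_of_lt (Nat.lt_of_succ_le hv)
    have ihh := ih hv'
    rw [Finset.sum_Icc_succ_top (by omega : 1 ≤ v + 1)]
    have hstep : (k:ℝ) * uMax L β ω k (v+2) - (k:ℝ) * uMax L β ω k (v+1)
        = ω * (lMax L β ω k (v+1) - L) := by
      unfold uMax
      rw [lMax_eq, lMax_eq]
      simp only [show v+2-1 = v+1 from rfl, show v+1-1 = v from rfl]
      have h2 : (1 + ω / (k:ℝ)) ^ (v + 1) = (1 + ω / (k:ℝ)) ^ v * (1 + ω / (k:ℝ)) := pow_succ _ _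
      rw [h2]
      field_simp
      ring
    push_cast
    push_cast at ihh
    linarith


lemma dtpr_main_ind (L U β : ℝ) (k T : ℕ) (hk : 1 ≤ k) (hT : k ≤ T) (hβ : 0 < 2 * β)
    (ℓ u : ℕ → ℝ) (hlu : ∀ j, u j = ℓ j + 2 * β) (hLl : ∀ j, L ≤ ℓ j)
    (humono : ∀ i j : ℕ, i ≤ j → u i ≤ u j) (hutop : u (k + 1) = U)
    (c : ℕ → ℝ) (hc : ∀ t ∈ Finset.Icc 1 T, c t ∈ Set.Icc L U) :
    ∀ t : ℕ,
      (dtprMaxState k T ℓ u c t).1 ≤ 1 ∧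
      1 ≤ (dtprMaxState k T ℓ u c t).2 ∧
      (dtprMaxState k T ℓ u c t).2 ≤ k + 1 ∧
      (dtprMaxState k T ℓ u c t).2 = 1 + ∑ j ∈ Icc 1 t, (dtprMaxState k T ℓ u c j).1 ∧
      (t ≤ T → (k : ℤ) + 1 - (dtprMaxState k T ℓ u c t).2 ≤ (T : ℤ) - t) ∧
      (T ≤ t → (dtprMaxState k T ℓ u c t).2 = k + 1) ∧
      ∃ v m : ℕ, (dtprMaxState k T ℓ u c t).2 = v + m + 1 ∧
        (1 ≤ m →
          ((dtprMaxState k T ℓ u c t).1 = 1 ∨ (dtprMaxState k T ℓ u c t).2 = k + 1) ∧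
          ((dtprMaxState k T ℓ u c t).2 ≤ k →
            (T : ℤ) ≤ (t : ℤ) + 1 + k - (dtprMaxState k T ℓ u c t).2) ∧
          ((dtprMaxState k T ℓ u c t).2 = k + 1 → T ≤ t)) ∧
        ((∑ j ∈ Icc 1 v, ℓ j) + m * L - (if m = 0 then 0 else 2 * β)
            + (∑ j ∈ Icc 1 t, exc L k T ℓ u c j)
          ≤ (∑ j ∈ Icc 1 t, c j * ((dtprMaxState k T ℓ u c j).1 : ℝ))
            - β * (∑ j ∈ Icc 1 t,
                |((dtprMaxState k T ℓ u c j).1 : ℝ) - ((dtprMaxState k T ℓ u c (j - 1)).1 : ℝ)|)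
            - β * (dtprMaxState k T ℓ u c t).1) ∧
        (∀ j ∈ Icc 1 t, j ≤ T → c j ≤ u (v + 1) + exc L k T ℓ u c j) ∧
        (∀ j ∈ Icc 1 t, 0 ≤ exc L k T ℓ u c j) := by
  intro t
  induction t with
  | zero =>
    refine ⟨by simp [dtprMaxState], by simp [dtprMaxState], by simp [dtprMaxState],
      by simp [dtprMaxState], ?_, ?_, 0, 0, by simp [dtprMaxState], by simp, ?_, by simp, by simp⟩
    · intro _
      simp only [dtprMaxState, Nat.cast_zero]
      push_cast
      omega
    · intro hT0
      omega
    · simp [dtprMaxState]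
  | succ t ih =>
    obtain ⟨ihx, ihi1, ihik, ihsum, ihc', ihf, v, m, hvm, hJ, hacct, hprice, hepos⟩ := ih
    have hunf : dtprMaxState k T ℓ u c (t + 1)
        = (if k < (dtprMaxState k T ℓ u c t).2 then (0, (dtprMaxState k T ℓ u c t).2)
          else if (T : ℤ) - ((t : ℤ) + 1) ≤ (k : ℤ) - ((dtprMaxState k T ℓ u c t).2 : ℤ) then
            (1, (dtprMaxState k T ℓ u c t).2 + 1)
          else if (dtprMaxState k T ℓ u c t).1 = 0 then
            (if u (dtprMaxState k T ℓ u c t).2 ≤ c (t + 1) then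
              (1, (dtprMaxState k T ℓ u c t).2 + 1) else (0, (dtprMaxState k T ℓ u c t).2))
          else
            (if ℓ (dtprMaxState k T ℓ u c t).2 ≤ c (t + 1) then
              (1, (dtprMaxState k T ℓ u c t).2 + 1) else (0, (dtprMaxState k T ℓ u c t).2))) := rfl
    have hunfE : exc L k T ℓ u c (t + 1)
        = (if k < (dtprMaxState k T ℓ u c t).2 then 0
          else if (T : ℤ) - ((t : ℤ) + 1) ≤ (k : ℤ) - ((dtprMaxState k T ℓ u c t).2 : ℤ) then
            c (t + 1) - L
          else if (dtprMaxState k T ℓ u c t).1 = 0 then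
            (if u (dtprMaxState k T ℓ u c t).2 ≤ c (t + 1) then c (t + 1) - u (dtprMaxState k T ℓ u c t).2 else 0)
          else
            (if ℓ (dtprMaxState k T ℓ u c t).2 ≤ c (t + 1) then c (t + 1) - ℓ (dtprMaxState k T ℓ u c t).2 else 0)) := rfl
    have hsplitR : ∀ f : ℕ → ℝ, ∑ j ∈ Icc 1 (t + 1), f j = (∑ j ∈ Icc 1 t, f j) + f (t + 1) :=
      fun f => Finset.sum_Icc_succ_top (by omega) f
    have hsplitN : ∀ f : ℕ → ℕ, ∑ j ∈ Icc 1 (t + 1), f j = (∑ j ∈ Icc 1 t, f j) + f (t + 1) :=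
      fun f => Finset.sum_Icc_succ_top (by omega) f
    have hsub1 : t + 1 - 1 = t := rfl
    have hx01 : (dtprMaxState k T ℓ u c t).1 = 0 ∨ (dtprMaxState k T ℓ u c t).1 = 1 := by omega
    by_cases h1 : k < (dtprMaxState k T ℓ u c t).2
    · -- counter exhausted
      have hik1 : (dtprMaxState k T ℓ u c t).2 = k + 1 := by omega
      have hD : dtprMaxState k T ℓ u c (t + 1) = (0, (dtprMaxState k T ℓ u c t).2) := by
        rw [hunf, if_pos h1]
      have hE : exc L k T ℓ u c (t + 1) = 0 := by rw [hunfE, if_pos h1]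
      refine ⟨by simp [hD], by simp [hD]; omega, by simp [hD]; omega, ?_, ?_, ?_,
        v, m, by simp [hD]; omega, ?_, ?_, ?_, ?_⟩
      · rw [hsplitN]
        simp only [hD]
        omega
      · intro ht1
        rw [hD]
        simp only
        omega
      · intro _; rw [hD]; exact hik1
      · intro hm
        obtain ⟨j1, j2, j3⟩ := hJ hm
        refine ⟨Or.inr (by rw [hD]; exact hik1), by rw [hD]; omega, ?_⟩
        intro _
        have := j3 hik1
        omega
      · simp only [hsplitR, hD, hE, Nat.add_sub_cancel, Nat.cast_zero, mul_zero, add_zero,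
          zero_sub, abs_neg]
        rcases hx01 with h | h <;>
          simp only [h, Nat.cast_zero, Nat.cast_one, abs_zero, abs_one, sub_zero, mul_zero,
            mul_one] at hacct ⊢ <;>
          linarith [hacct]
      · intro j hj hjT
        rcases Nat.lt_or_ge j (t + 1) with h | h
        · exact hprice j (by simp at hj ⊢; omega) hjT
        · have hjt : j = t + 1 := by simp at hj; omega
          subst hjt
          rw [hE]
          have hvmk : v + m = k := by omega
          rcases Nat.eq_zero_or_pos m with hm0 | hm1
          · have hv : v = k := by omega
            have := (hc (t+1) (by simp; omega)).2
            rw [hv, hutop]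
            linarith
          · exfalso
            have := (hJ hm1).2.2 hik1
            omega
      · intro j hj
        rcases Nat.lt_or_ge j (t + 1) with h | h
        · exact hepos j (by simp at hj ⊢; omega)
        · have hjt : j = t + 1 := by simp at hj; omega
          subst hjt; rw [hE]
    · -- counter still active
      push_neg at h1
      have htT : t < T := by
        by_contra hcon
        have := ihf (by omega)
        omega
      have hcm : c (t + 1) ∈ Set.Icc L U := hc (t + 1) (by simp; omega)
      have hcL : L ≤ c (t + 1) := hcm.1
      have hcU : c (t + 1) ≤ U := hcm.2
      have hnlt : ¬ k < (dtprMaxState k T ℓ u c t).2 := by omega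
      by_cases h2 : (T : ℤ) - ((t : ℤ) + 1) ≤ (k : ℤ) - ((dtprMaxState k T ℓ u c t).2 : ℤ)
      · -- forced acceptance
        have hD : dtprMaxState k T ℓ u c (t + 1) = (1, (dtprMaxState k T ℓ u c t).2 + 1) := by
          rw [hunf, if_neg hnlt, if_pos h2]
        have hE : exc L k T ℓ u c (t + 1) = c (t + 1) - L := by
          rw [hunfE, if_neg hnlt, if_pos h2]
        have h5 := ihc' (le_of_lt htT)
        refine ⟨by simp [hD], by simp [hD], by simp [hD]; omega, ?_, ?_, ?_,
          v, m + 1, by simp [hD]; omega, ?_, ?_, ?_, ?_⟩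
        · rw [hsplitN]
          simp only [hD]
          omega
        · intro _
          simp only [hD]
          push_cast
          push_cast at h2
          omega
        · intro hTt1
          simp only [hD]
          push_cast at h2 h5
          omega
        · intro _
          refine ⟨Or.inl (by simp [hD]), ?_, ?_⟩
          · simp only [hD]
            intro h6
            push_cast at h2 ⊢
            omega
          · simp only [hD]
            intro h7
            push_cast at h2
            omega
        · simp only [hsplitR, hD, hE, Nat.add_sub_cancel, Nat.cast_one, mul_one]
          have hif : (if m + 1 = 0 then (0:ℝ) else 2 * β) = 2 * β := by norm_num
          rw [hif]
          rcases Nat.eq_zero_or_pos m with hm0 | hm1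
          · subst hm0
            norm_num at hacct
            rcases hx01 with h | h <;>
              simp only [h, Nat.cast_zero, Nat.cast_one, sub_zero, mul_zero, mul_one] at hacct ⊢ <;>
              push_cast <;>
              norm_num <;>
              linarith
          · have hx1 : (dtprMaxState k T ℓ u c t).1 = 1 := by
              rcases (hJ hm1).1 with h | h
              · exact h
              · omega
            have hifold : (if m = 0 then (0:ℝ) else 2 * β) = 2 * β := by
              rw [if_neg (by omega)]
            rw [hifold] at hacct
            simp only [hx1, Nat.cast_one, mul_one] at hacct ⊢
            push_cast
            norm_num
            linarith
        · intro j hj hjT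
          rcases Nat.lt_or_ge j (t + 1) with h | h
          · exact hprice j (by simp at hj ⊢; omega) hjT
          · have hjt : j = t + 1 := by simp at hj; omega
            subst hjt
            rw [hE]
            have := hLl (v + 1)
            have := hlu (v + 1)
            linarith
        · intro j hj
          rcases Nat.lt_or_ge j (t + 1) with h | h
          · exact hepos j (by simp at hj ⊢; omega)
          · have hjt : j = t + 1 := by simp at hj; omega
            subst hjt; rw [hE]; linarith
      · -- threshold-based decision
        have hm0 : m = 0 := by
          by_contra hm
          obtain ⟨ja, jb, jc⟩ := hJ (by omega)
          have hx1 : (dtprMaxState k T ℓ u c t).1 = 1 := by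
            rcases ja with h | h
            · exact h
            · omega
          have := jb h1
          push_cast at this
          push_cast at h2
          omega
        have hiv : (dtprMaxState k T ℓ u c t).2 = v + 1 := by omega
        have hnT1 : ¬ T ≤ t + 1 := by
          intro hcon
          have hTt1 : T = t + 1 := by omega
          subst hTt1
          push_cast at h2
          omega
        by_cases h3 : (dtprMaxState k T ℓ u c t).1 = 0
        · by_cases h4 : u (dtprMaxState k T ℓ u c t).2 ≤ c (t + 1)
          · -- voluntary acceptance from idle
            have hD : dtprMaxState k T ℓ u c (t + 1) = (1, (dtprMaxState k T ℓ u c t).2 + 1) := by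
              rw [hunf, if_neg hnlt, if_neg h2, if_pos h3, if_pos h4]
            have hE : exc L k T ℓ u c (t + 1)
                = c (t + 1) - u (dtprMaxState k T ℓ u c t).2 := by
              rw [hunfE, if_neg hnlt, if_neg h2, if_pos h3, if_pos h4]
            have h5 := ihc' (le_of_lt htT)
            refine ⟨by simp [hD], by simp [hD], by simp [hD]; omega, ?_, ?_, ?_,
              v + 1, 0, by simp [hD]; omega, by intro hcon; omega, ?_, ?_, ?_⟩
            · rw [hsplitN]
              simp only [hD]
              omega
            · intro _
              simp only [hD]
              push_cast at h5 ⊢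
              omega
            · intro hcon; exact absurd hcon hnT1
            · simp only [hsplitR, hD, hE, Nat.add_sub_cancel, Nat.cast_one, mul_one]
              rw [Finset.sum_Icc_succ_top (by omega : 1 ≤ v + 1)]
              norm_num at hacct ⊢
              simp only [h3, hm0, hiv, Nat.cast_zero, Nat.cast_one, sub_zero, mul_zero,
                mul_one] at hacct ⊢
              norm_num at hacct
              have := hlu (v + 1)
              simp only [abs_one, sub_self, abs_zero]
              linarith
            · intro j hj hjT
              have hmon : u (v + 1) ≤ u (v + 2) := humono _ _ (by omega)
              rcases Nat.lt_or_ge j (t + 1) with h | h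
              · have := hprice j (by simp at hj ⊢; omega) hjT
                have := hepos j (by simp at hj ⊢; omega)
                linarith
              · have hjt : j = t + 1 := by simp at hj; omega
                subst hjt
                rw [hE, hiv]
                linarith
            · intro j hj
              rcases Nat.lt_or_ge j (t + 1) with h | h
              · exact hepos j (by simp at hj ⊢; omega)
              · have hjt : j = t + 1 := by simp at hj; omega
                subst hjt; rw [hE]; linarith
          · -- rejection from idle
            have hD : dtprMaxState k T ℓ u c (t + 1) = (0, (dtprMaxState k T ℓ u c t).2) := by
              rw [hunf, if_neg hnlt, if_neg h2, if_pos h3, if_neg h4]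
            have hE : exc L k T ℓ u c (t + 1) = 0 := by
              rw [hunfE, if_neg hnlt, if_neg h2, if_pos h3, if_neg h4]
            refine ⟨by simp [hD], by simp [hD]; omega, by simp [hD]; omega, ?_, ?_, ?_,
              v, m, by simp [hD]; omega, by intro hcon; omega, ?_, ?_, ?_⟩
            · rw [hsplitN]
              simp only [hD]
              omega
            · intro _
              simp only [hD]
              push_cast at h2 ⊢
              omega
            · intro hcon; exact absurd hcon hnT1
            · simp only [hsplitR, hD, hE, Nat.add_sub_cancel, Nat.cast_zero, mul_zero, add_zero]
              simp only [h3, Nat.cast_zero, mul_zero, sub_zero] at hacct ⊢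
              norm_num
              linarith
            · intro j hj hjT
              rcases Nat.lt_or_ge j (t + 1) with h | h
              · exact hprice j (by simp at hj ⊢; omega) hjT
              · have hjt : j = t + 1 := by simp at hj; omega
                subst hjt
                rw [hE]
                push_neg at h4
                rw [← hiv]
                linarith
            · intro j hj
              rcases Nat.lt_or_ge j (t + 1) with h | h
              · exact hepos j (by simp at hj ⊢; omega)
              · have hjt : j = t + 1 := by simp at hj; omega
                subst hjt; rw [hE]
        · by_cases h4 : ℓ (dtprMaxState k T ℓ u c t).2 ≤ c (t + 1)
          · -- voluntary acceptance while active
            have hx1 : (dtprMaxState k T ℓ u c t).1 = 1 := by omega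
            have hD : dtprMaxState k T ℓ u c (t + 1) = (1, (dtprMaxState k T ℓ u c t).2 + 1) := by
              rw [hunf, if_neg hnlt, if_neg h2, if_neg h3, if_pos h4]
            have hE : exc L k T ℓ u c (t + 1)
                = c (t + 1) - ℓ (dtprMaxState k T ℓ u c t).2 := by
              rw [hunfE, if_neg hnlt, if_neg h2, if_neg h3, if_pos h4]
            have h5 := ihc' (le_of_lt htT)
            refine ⟨by simp [hD], by simp [hD], by simp [hD]; omega, ?_, ?_, ?_,
              v + 1, 0, by simp [hD]; omega, by intro hcon; omega, ?_, ?_, ?_⟩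
            · rw [hsplitN]
              simp only [hD]
              omega
            · intro _
              simp only [hD]
              push_cast at h5 ⊢
              omega
            · intro hcon; exact absurd hcon hnT1
            · simp only [hsplitR, hD, hE, Nat.add_sub_cancel, Nat.cast_one, mul_one]
              rw [Finset.sum_Icc_succ_top (by omega : 1 ≤ v + 1)]
              norm_num at hacct ⊢
              simp only [hx1, hm0, hiv, Nat.cast_zero, Nat.cast_one, sub_zero, mul_zero,
                mul_one] at hacct ⊢
              norm_num at hacct
              simp only [abs_one, sub_self, abs_zero]
              linarith
            · intro j hj hjT
              have hmon : u (v + 1) ≤ u (v + 2) := humono _ _ (by omega)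
              rcases Nat.lt_or_ge j (t + 1) with h | h
              · have := hprice j (by simp at hj ⊢; omega) hjT
                have := hepos j (by simp at hj ⊢; omega)
                linarith
              · have hjt : j = t + 1 := by simp at hj; omega
                subst hjt
                rw [hE, hiv]
                have := hlu (v + 1)
                linarith
            · intro j hj
              rcases Nat.lt_or_ge j (t + 1) with h | h
              · exact hepos j (by simp at hj ⊢; omega)
              · have hjt : j = t + 1 := by simp at hj; omega
                subst hjt; rw [hE]; linarith
          · -- rejection while active
            have hx1 : (dtprMaxState k T ℓ u c t).1 = 1 := by omega
            have hD : dtprMaxState k T ℓ u c (t + 1) = (0, (dtprMaxState k T ℓ u c t).2) := by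
              rw [hunf, if_neg hnlt, if_neg h2, if_neg h3, if_neg h4]
            have hE : exc L k T ℓ u c (t + 1) = 0 := by
              rw [hunfE, if_neg hnlt, if_neg h2, if_neg h3, if_neg h4]
            refine ⟨by simp [hD], by simp [hD]; omega, by simp [hD]; omega, ?_, ?_, ?_,
              v, m, by simp [hD]; omega, by intro hcon; omega, ?_, ?_, ?_⟩
            · rw [hsplitN]
              simp only [hD]
              omega
            · intro _
              simp only [hD]
              push_cast at h2 ⊢
              omega
            · intro hcon; exact absurd hcon hnT1
            · simp only [hsplitR, hD, hE, Nat.add_sub_cancel, Nat.cast_zero, mul_zero, add_zero]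
              simp only [hx1, Nat.cast_zero, Nat.cast_one, mul_zero, mul_one, sub_zero]
                at hacct ⊢
              norm_num
              linarith
            · intro j hj hjT
              rcases Nat.lt_or_ge j (t + 1) with h | h
              · exact hprice j (by simp at hj ⊢; omega) hjT
              · have hjt : j = t + 1 := by simp at hj; omega
                subst hjt
                rw [hE]
                push_neg at h4
                have := hlu (v + 1)
                rw [← hiv] at *
                linarith [hlu (dtprMaxState k T ℓ u c t).2]
            · intro j hj
              rcases Nat.lt_or_ge j (t + 1) with h | h
              · exact hepos j (by simp at hj ⊢; omega)
              · have hjt : j = t + 1 := by simp at hj; omega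
                subst hjt; rw [hE]

lemma telescope_Ioc (g : ℕ → ℝ) : ∀ b a : ℕ, a ≤ b →
    ∑ i ∈ Ioc a b, (g i - g (i - 1)) = g b - g a := by
  intro b
  induction b with
  | zero =>
    intro a ha
    interval_cases a
    simp
  | succ b ihb =>
    intro a ha
    rcases Nat.lt_or_ge a (b + 1) with h | h
    · have hab : a ≤ b := by omega
      rw [← Finset.sum_Ioc_consecutive _ hab (Nat.le_succ b), ihb a hab,
        Nat.Ioc_succ_singleton, Finset.sum_singleton]
      simp only [Nat.add_sub_cancel]
      ring
    · have : a = b + 1 := by omega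
      subst this
      simp

lemma switch_lower (T k : ℕ) (hk : 1 ≤ k) (y : ℕ → ℕ) (hfe : Feasible T k y) :
    (2 : ℝ) ≤ ∑ t ∈ Icc 1 (T + 1), |(y t : ℝ) - (y (t - 1) : ℝ)| := by
  obtain ⟨hy1, hy0, hyT, hys⟩ := hfe
  have hex : ∃ t0 ∈ Icc 1 T, y t0 ≠ 0 := by
    by_contra h
    push_neg at h
    rw [Finset.sum_eq_zero h] at hys
    omega
  obtain ⟨t0, ht0m, ht0⟩ := hex
  simp only [mem_Icc] at ht0m
  have hyt0 : y t0 = 1 := by have := hy1 t0; omega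
  have hIcc : Icc 1 (T + 1) = Ioc 0 (T + 1) := by ext x; simp; omega
  rw [hIcc, ← Finset.sum_Ioc_consecutive _ (Nat.zero_le t0) (by omega : t0 ≤ T + 1)]
  have habs : ∀ (a b : ℕ), a ≤ b →
      |(y b : ℝ) - (y a : ℝ)| ≤ ∑ i ∈ Ioc a b, |(y i : ℝ) - (y (i - 1) : ℝ)| := by
    intro a b hab
    rw [← telescope_Ioc (fun i => (y i : ℝ)) b a hab]
    exact Finset.abs_sum_le_sum_abs _ _
  have h1 := habs 0 t0 (by omega)
  have h2 := habs t0 (T + 1) (by omega)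
  rw [hy0, hyt0] at h1
  rw [hyT, hyt0] at h2
  norm_num at h1 h2
  linarith


set_option maxHeartbeats 1000000 in
/-- **Theorem 4.2 (DTPR-max is ω-competitive).** -/
theorem dtpr_max_competitive
    (L U : ℝ) (hL : 0 < L) (hLU : L < U)
    (k T : ℕ) (hk : 1 ≤ k) (hT : k ≤ T)
    (β : ℝ) (hβ : 0 < 2 * β) (hβUL : 2 * β < U - L) (hβkL : 2 * β < (k : ℝ) * L)
    (ω : ℝ) (hω : 0 < ω)
    (heq : U - L - 2 * β
      = (L * (ω - 1) - 2 * β * (1 - 1 / (k : ℝ) + ω / (k : ℝ)))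
          * (1 + ω / (k : ℝ)) ^ k)
    (c : ℕ → ℝ) (hc : ∀ t ∈ Finset.Icc 1 T, c t ∈ Set.Icc L U) :
    Feasible T k (dtprMaxX k T (lMax L β ω k) (uMax L β ω k) c) ∧
      OPTmax β T k c
        ≤ ω * profit β T c (dtprMaxX k T (lMax L β ω k) (uMax L β ω k) c) := by
  have hA := A_pos L U β ω k hk hβUL hω heq
  have hω1 := omega_gt_one L U β ω k hL hk hβ hβUL hω heq
  have hlu : ∀ j, uMax L β ω k j = lMax L β ω k j + 2 * β := fun j => rfl
  have hLl : ∀ j, L ≤ lMax L β ω k j :=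
    fun j => le_of_lt (lMax_gt_L L β ω k hk hω1 hA j)
  have humono : ∀ i j : ℕ, i ≤ j → uMax L β ω k i ≤ uMax L β ω k j :=
    fun i j h => uMax_mono L β ω k hk hβ hω1 hA h
  have hutop : uMax L β ω k (k + 1) = U := uMax_top L U β ω k heq
  have H := dtpr_main_ind L U β k T hk hT hβ (lMax L β ω k) (uMax L β ω k)
    hlu hLl humono hutop c hc
  obtain ⟨hx, hi1, hik, hsum, hcT, hfT, v, m, hvm, hJ, hacct, hprice, hepos⟩ := H T
  have hiT : (dtprMaxState k T (lMax L β ω k) (uMax L β ω k) c T).2 = k + 1 := hfT le_rfl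
  have hxT1 : (dtprMaxState k T (lMax L β ω k) (uMax L β ω k) c (T + 1)).1 = 0 := by
    have e1 : dtprMaxState k T (lMax L β ω k) (uMax L β ω k) c (T + 1)
        = (if k < (dtprMaxState k T (lMax L β ω k) (uMax L β ω k) c T).2 then
            (0, (dtprMaxState k T (lMax L β ω k) (uMax L β ω k) c T).2)
          else if (T : ℤ) - ((T : ℤ) + 1)
              ≤ (k : ℤ) - ((dtprMaxState k T (lMax L β ω k) (uMax L β ω k) c T).2 : ℤ) then
            (1, (dtprMaxState k T (lMax L β ω k) (uMax L β ω k) c T).2 + 1)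
          else if (dtprMaxState k T (lMax L β ω k) (uMax L β ω k) c T).1 = 0 then
            (if uMax L β ω k (dtprMaxState k T (lMax L β ω k) (uMax L β ω k) c T).2 ≤ c (T + 1)
              then (1, (dtprMaxState k T (lMax L β ω k) (uMax L β ω k) c T).2 + 1)
              else (0, (dtprMaxState k T (lMax L β ω k) (uMax L β ω k) c T).2))
          else
            (if lMax L β ω k (dtprMaxState k T (lMax L β ω k) (uMax L β ω k) c T).2 ≤ c (T + 1)
              then (1, (dtprMaxState k T (lMax L β ω k) (uMax L β ω k) c T).2 + 1)
              else (0, (dtprMaxState k T (lMax L β ω k) (uMax L β ω k) c T).2))) := rfl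
    rw [e1, if_pos (by omega)]
  have hfeas : Feasible T k (dtprMaxX k T (lMax L β ω k) (uMax L β ω k) c) := by
    refine ⟨fun t => (H t).1, rfl, hxT1, ?_⟩
    have := hsum
    simp only [dtprMaxX]
    omega
  refine ⟨hfeas, ?_⟩
  -- profit of the algorithm
  have hsplitT : ∑ t ∈ Icc 1 (T + 1),
        |((dtprMaxState k T (lMax L β ω k) (uMax L β ω k) c t).1 : ℝ)
          - ((dtprMaxState k T (lMax L β ω k) (uMax L β ω k) c (t - 1)).1 : ℝ)|
      = (∑ t ∈ Icc 1 T,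
          |((dtprMaxState k T (lMax L β ω k) (uMax L β ω k) c t).1 : ℝ)
            - ((dtprMaxState k T (lMax L β ω k) (uMax L β ω k) c (t - 1)).1 : ℝ)|)
        + ((dtprMaxState k T (lMax L β ω k) (uMax L β ω k) c T).1 : ℝ) := by
    rw [Finset.sum_Icc_succ_top (by omega : 1 ≤ T + 1)]
    simp only [Nat.add_sub_cancel, hxT1, Nat.cast_zero, zero_sub, abs_neg]
    rw [abs_of_nonneg (by positivity)]
  have hALG : (∑ j ∈ Icc 1 v, lMax L β ω k j) + m * L - 2 * β
        + (∑ j ∈ Icc 1 T, exc L k T (lMax L β ω k) (uMax L β ω k) c j)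
      ≤ profit β T c (dtprMaxX k T (lMax L β ω k) (uMax L β ω k) c) := by
    have hif : (if m = 0 then (0:ℝ) else 2 * β) ≤ 2 * β := by
      split <;> linarith
    unfold profit
    simp only [dtprMaxX]
    rw [hsplitT]
    linarith
  have hvk : v + m = k := by omega
  have hid := identityI L β ω k hk v (by omega)
  have hEnn : 0 ≤ ∑ j ∈ Icc 1 T, exc L k T (lMax L β ω k) (uMax L β ω k) c j :=
    Finset.sum_nonneg hepos
  have hne : {vv : ℝ | ∃ x : ℕ → ℕ, Feasible T k x ∧ profit β T c x = vv}.Nonempty :=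
    ⟨profit β T c (dtprMaxX k T (lMax L β ω k) (uMax L β ω k) c),
      ⟨dtprMaxX k T (lMax L β ω k) (uMax L β ω k) c, hfeas, rfl⟩⟩
  unfold OPTmax
  apply csSup_le hne
  rintro b ⟨y, hyfe, rfl⟩
  have hy1 := hyfe.1
  have hswitch := switch_lower T k hk y hyfe
  have hcy : ∑ t ∈ Icc 1 T, c t * (y t : ℝ)
      ≤ (k : ℝ) * uMax L β ω k (v + 1)
        + ∑ j ∈ Icc 1 T, exc L k T (lMax L β ω k) (uMax L β ω k) c j := by
    have step1 : ∑ t ∈ Icc 1 T, c t * (y t : ℝ)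
        ≤ ∑ t ∈ Icc 1 T, (uMax L β ω k (v + 1)
            + exc L k T (lMax L β ω k) (uMax L β ω k) c t) * (y t : ℝ) := by
      apply Finset.sum_le_sum
      intro j hj
      apply mul_le_mul_of_nonneg_right (hprice j hj (by simp at hj; omega)) (by positivity)
    have step2 : ∑ t ∈ Icc 1 T, (uMax L β ω k (v + 1)
            + exc L k T (lMax L β ω k) (uMax L β ω k) c t) * (y t : ℝ)
        = uMax L β ω k (v + 1) * (∑ t ∈ Icc 1 T, (y t : ℝ))
          + ∑ t ∈ Icc 1 T, exc L k T (lMax L β ω k) (uMax L β ω k) c t * (y t : ℝ) := by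
      rw [Finset.mul_sum, ← Finset.sum_add_distrib]
      apply Finset.sum_congr rfl
      intro j _
      ring
    have step3 : (∑ t ∈ Icc 1 T, (y t : ℝ)) = (k : ℝ) := by
      rw [← Nat.cast_sum]
      exact_mod_cast congrArg (Nat.cast : ℕ → ℝ) hyfe.2.2.2
    have step4 : ∑ t ∈ Icc 1 T, exc L k T (lMax L β ω k) (uMax L β ω k) c t * (y t : ℝ)
        ≤ ∑ t ∈ Icc 1 T, exc L k T (lMax L β ω k) (uMax L β ω k) c t := by
      apply Finset.sum_le_sum
      intro j hj
      have h1 : ((y j : ℝ)) ≤ 1 := by exact_mod_cast hy1 j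
      have h2 := hepos j hj
      nlinarith
    rw [step2, step3] at step1
    linarith
  have hprofy : profit β T c y ≤ (k : ℝ) * uMax L β ω k (v + 1) - 2 * β
      + ∑ j ∈ Icc 1 T, exc L k T (lMax L β ω k) (uMax L β ω k) c j := by
    unfold profit
    nlinarith [hswitch, hβ]
  have hm' : (m : ℝ) = (k : ℝ) - (v : ℝ) := by
    have : (v : ℝ) + (m : ℝ) = (k : ℝ) := by exact_mod_cast congrArg (Nat.cast : ℕ → ℝ) hvk
    linarith
  rw [hm'] at hALG
  calc profit β T c y
      ≤ (k : ℝ) * uMax L β ω k (v + 1) - 2 * β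
        + ∑ j ∈ Icc 1 T, exc L k T (lMax L β ω k) (uMax L β ω k) c j := hprofy
    _ = ω * ((∑ j ∈ Icc 1 v, lMax L β ω k j) + ((k : ℝ) - v) * L - 2 * β)
        + ∑ j ∈ Icc 1 T, exc L k T (lMax L β ω k) (uMax L β ω k) c j := by rw [hid]
    _ ≤ ω * ((∑ j ∈ Icc 1 v, lMax L β ω k j) + ((k : ℝ) - v) * L - 2 * β
        + ∑ j ∈ Icc 1 T, exc L k T (lMax L β ω k) (uMax L β ω k) c j) := by nlinarith
    _ ≤ ω * profit β T c (dtprMaxX k T (lMax L β ω k) (uMax L β ω k) c) := by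
        apply mul_le_mul_of_nonneg_left _ (by linarith)
        linarith [hALG]
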